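/- For 1 ≤ ℓ ≤ min(2t, n⌊m/2⌋ - 1), the intersection of two Lee balls of radius t in Z_m^n with centers 0 and (1^ℓ 0^{n-ℓ}) has size at most m^ℓ · V(n - ⌈ℓ/2⌉, t - ⌈ℓ/2⌉), where V(n', s) is the Lee ball volume in Z_m^{n'} of radius s. -/

import Mathlib

open Finset

def leeWt (m : ℕ) (x : ZMod m) : ℕ := min x.val (m - x.val)
def leeWtV (m n : ℕ) (x : Fin n → ZMod m) : ℕ := ∑ i, leeWt m (x i)
def leeDist (m n : ℕ) (x y : Fin n → ZMod m) : ℕ := leeWtV m n (x - y)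
def leeBall (m n : ℕ) [NeZero m] (t : ℕ) (c : Fin n → ZMod m) : Finset (Fin n → ZMod m) :=
  Finset.univ.filter (fun y => leeDist m n y c ≤ t)
def leeVol (m n : ℕ) [NeZero m] (r : ℕ) : ℕ := (leeBall m n r 0).card
def oneVec (m n ℓ : ℕ) : Fin n → ZMod m := fun i => if (i : ℕ) < ℓ then 1 else 0

lemma leeWt_zero (m : ℕ) [NeZero m] : leeWt m 0 = 0 := by simp [leeWt]

lemma leeWt_pos (m : ℕ) [NeZero m] {x : ZMod m} (hx : x ≠ 0) : 1 ≤ leeWt m x := by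
  have h1 : x.val < m := ZMod.val_lt x
  have h2 : x.val ≠ 0 := fun h => hx (by rwa [← ZMod.val_eq_zero])
  simp only [leeWt]; omega

lemma leeVol_pos (m n r : ℕ) [NeZero m] : 1 ≤ leeVol m n r := by
  have : (0 : Fin n → ZMod m) ∈ leeBall m n r 0 := by
    simp [leeBall, leeDist, leeWtV, leeWt_zero]
  exact Finset.card_pos.mpr ⟨0, this⟩

open Fin.NatCast

theorem intersection_upper_bound (m n t ℓ : ℕ) [NeZero m] (hm : 2 ≤ m) (hn : 1 ≤ n)
    (ht : 1 ≤ t) (hl1 : 1 ≤ ℓ) (hl2 : ℓ ≤ min (2 * t) (n * (m / 2) - 1)) :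
    ((leeBall m n t 0) ∩ (leeBall m n t (oneVec m n ℓ))).card ≤
      m ^ ℓ * leeVol m (n - (ℓ + 1) / 2) (t - (ℓ + 1) / 2) := by
  haveI : NeZero n := ⟨by omega⟩
  by_cases hln : ℓ ≤ n
  swap
  · -- easy case: ℓ > n
    have h1 : ((leeBall m n t 0) ∩ (leeBall m n t (oneVec m n ℓ))).card ≤ m ^ n := by
      calc _ ≤ (Finset.univ : Finset (Fin n → ZMod m)).card := Finset.card_le_card (by simp)
        _ = m ^ n := by simp [ZMod.card]
    calc _ ≤ m ^ n := h1
      _ ≤ m ^ ℓ * 1 := by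
          rw [mul_one]; exact Nat.pow_le_pow_right (by omega) (by omega)
      _ ≤ _ := Nat.mul_le_mul_left _ (leeVol_pos _ _ _)
  · set k := (ℓ + 1) / 2 with hk
    have hkl : k ≤ ℓ := by omega
    have hkt : k ≤ t := by omega
    set S := (leeBall m n t 0) ∩ (leeBall m n t (oneVec m n ℓ)) with hS
    set f : (Fin n → ZMod m) → (Fin ℓ → ZMod m) × (Fin (n - k) → ZMod m) :=
      fun y => (fun i => y ⟨i, lt_of_lt_of_le i.2 hln⟩,
        fun j => if h : (j : ℕ) + ℓ < n then y ⟨(j : ℕ) + ℓ, h⟩ else 0) with hf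
    have key : S.card ≤ ((Finset.univ : Finset (Fin ℓ → ZMod m)) ×ˢ
        leeBall m (n - k) (t - k) 0).card := by
      apply Finset.card_le_card_of_injOn f
      · intro y hy
        rw [Finset.mem_coe, Finset.mem_product]
        rw [Finset.mem_coe] at hy
        refine ⟨Finset.mem_univ _, ?_⟩
        -- membership in the small ball
        simp only [hS, Finset.mem_inter, leeBall, Finset.mem_filter, Finset.mem_univ,
          true_and] at hy
        obtain ⟨hy1, hy2⟩ := hy
        set F : ℕ → ℕ := fun i => leeWt m (y (i : Fin n)) with hF
        set G : ℕ → ℕ := fun i => leeWt m ((y - oneVec m n ℓ) (i : Fin n)) with hG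
        have hsum1 : leeDist m n y 0 = ∑ i ∈ range n, F i := by
          rw [leeDist, sub_zero, leeWtV, ← Fin.sum_univ_eq_sum_range]
          exact Finset.sum_congr rfl (fun i _ => by rw [hF]; simp [Fin.cast_val_eq_self])
        have hsum2 : leeDist m n y (oneVec m n ℓ) = ∑ i ∈ range n, G i := by
          rw [leeDist, leeWtV, ← Fin.sum_univ_eq_sum_range]
          exact Finset.sum_congr rfl (fun i _ => by rw [hG]; simp [Fin.cast_val_eq_self])
        have hGF : ∀ j < n - ℓ, G (ℓ + j) = F (ℓ + j) := by
          intro j hj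
          have hlt : ℓ + j < n := by omega
          have hval : ((ℓ + j : ℕ) : Fin n).val = ℓ + j := Fin.val_cast_of_lt hlt
          rw [hG, hF]
          simp only [Pi.sub_apply, oneVec, hval]
          rw [if_neg (by omega), sub_zero]
        have hAB : ∀ i < ℓ, 1 ≤ F i + G i := by
          intro i hi
          by_cases h0 : y (i : Fin n) = 0
          · have : (y - oneVec m n ℓ) (i : Fin n) ≠ 0 := by
              haveI : Fact (1 < m) := ⟨by omega⟩
              simp only [Pi.sub_apply, oneVec, Fin.val_cast_of_lt (lt_of_lt_of_le hi hln),
                if_pos hi, h0, zero_sub, ne_eq, neg_eq_zero]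
              exact one_ne_zero
            have := leeWt_pos m this
            simp only [hF, hG]; omega
          · have := leeWt_pos m h0
            simp only [hF, hG]; omega
        -- split range n sums
        have hnsplit : n = ℓ + (n - ℓ) := by omega
        have split1 : ∑ i ∈ range n, F i
            = ∑ i ∈ range ℓ, F i + ∑ j ∈ range (n - ℓ), F (ℓ + j) := by
          calc ∑ i ∈ range n, F i = ∑ i ∈ range (ℓ + (n - ℓ)), F i := by rw [← hnsplit]
            _ = _ := Finset.sum_range_add F ℓ (n - ℓ)
        have split2 : ∑ i ∈ range n, G i
            = ∑ i ∈ range ℓ, G i + ∑ j ∈ range (n - ℓ), F (ℓ + j) := by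
          calc ∑ i ∈ range n, G i = ∑ i ∈ range (ℓ + (n - ℓ)), G i := by rw [← hnsplit]
            _ = ∑ i ∈ range ℓ, G i + ∑ j ∈ range (n - ℓ), G (ℓ + j) :=
                Finset.sum_range_add G ℓ (n - ℓ)
            _ = _ := by
              congr 1
              exact Finset.sum_congr rfl (fun j hj => hGF j (Finset.mem_range.mp hj))
        have hABsum : ℓ ≤ ∑ i ∈ range ℓ, F i + ∑ i ∈ range ℓ, G i := by
          rw [← Finset.sum_add_distrib]
          calc ℓ = ∑ _i ∈ range ℓ, 1 := by simp
            _ ≤ _ := Finset.sum_le_sum (fun i hi => hAB i (Finset.mem_range.mp hi))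
        have htail : ∑ j ∈ range (n - ℓ), F (ℓ + j) ≤ t - k := by
          rw [hsum1, split1] at hy1
          rw [hsum2, split2] at hy2
          omega
        -- now show membership
        simp only [leeBall, Finset.mem_filter, Finset.mem_univ, true_and, leeDist, sub_zero,
          leeWtV]
        have hpad : ∑ j : Fin (n - k),
            leeWt m (if h : (j : ℕ) + ℓ < n then y ⟨(j : ℕ) + ℓ, h⟩ else 0)
            = ∑ j ∈ range (n - ℓ), F (ℓ + j) := by
          set P : ℕ → ℕ := fun j => if h : j + ℓ < n then leeWt m (y ⟨j + ℓ, h⟩) else 0 with hP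
          have e1 : ∀ j : Fin (n - k),
              leeWt m (if h : (j : ℕ) + ℓ < n then y ⟨(j : ℕ) + ℓ, h⟩ else 0) = P (j : ℕ) := by
            intro j
            by_cases h : (j : ℕ) + ℓ < n
            · simp only [hP, dif_pos h]
            · simp only [hP, dif_neg h, leeWt_zero]
          rw [Finset.sum_congr rfl (fun j _ => e1 j), Fin.sum_univ_eq_sum_range]
          have e2 : n - k = (n - ℓ) + (ℓ - k) := by omega
          rw [e2, Finset.sum_range_add]
          have e3 : ∑ i ∈ range (ℓ - k), P (n - ℓ + i) = 0 := by
            apply Finset.sum_eq_zero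
            intro i hi
            have hi' := Finset.mem_range.mp hi
            simp only [hP]
            rw [dif_neg (by omega)]
          rw [e3, add_zero]
          apply Finset.sum_congr rfl
          intro j hj
          have hjn : j + ℓ < n := by
            have := Finset.mem_range.mp hj; omega
          simp only [hP, hF, dif_pos hjn]
          have hcast : ((ℓ + j : ℕ) : Fin n) = ⟨j + ℓ, hjn⟩ :=
            Fin.ext (by
              rw [Fin.val_cast_of_lt (show ℓ + j < n by omega)]
              show ℓ + j = j + ℓ
              omega)
          rw [hcast]
        show ∑ j : Fin (n - k),
            leeWt m (if h : (j : ℕ) + ℓ < n then y ⟨(j : ℕ) + ℓ, h⟩ else 0) ≤ t - k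
        rw [hpad]; exact htail
      · intro y hy y' hy' heq
        funext i
        by_cases hi : (i : ℕ) < ℓ
        · have h2 := congrFun (congrArg Prod.fst heq) ⟨(i : ℕ), hi⟩
          simp only [hf] at h2
          simpa using h2
        · have h2 := congrFun (congrArg Prod.snd heq) ⟨(i : ℕ) - ℓ, by omega⟩
          simp only [hf] at h2
          have hc : ((⟨(i : ℕ) - ℓ, by omega⟩ : Fin (n - k)) : ℕ) + ℓ < n := by
            simp only []; omega
          rw [dif_pos hc, dif_pos hc] at h2
          have he : (⟨((⟨(i : ℕ) - ℓ, by omega⟩ : Fin (n - k)) : ℕ) + ℓ, hc⟩ : Fin n) = i :=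
            Fin.ext (by simp only []; omega)
          rwa [he] at h2
    calc S.card ≤ _ := key
      _ = m ^ ℓ * leeVol m (n - k) (t - k) := by
        rw [Finset.card_product]
        congr 1
        simp [ZMod.card]
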